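/- Let α be a type of data proposals, β a type of digests, digest : α → β an injective function (modeling a collision-resistant hash), and parent : α → β a function giving the parent reference recorded in each proposal. Let k ∈ ℕ and let c, d : Fin (k+1) → α be two chains satisfying parent (c i.succ) = digest (c i.castSucc) and parent (d i.succ) = digest (d i.castSucc) for all i : Fin k. If c k = d k (the two chains have the same tip), then c i = d i for all i; that is, agreement on a lane tip uniquely determines the entire lane history it transitively references. -/
import Mathlib

/-- With an injective (collision-resistant) digest, two chains of proposals,
each linked by parent references to the digest of the predecessor, that agree
on their tip agree everywhere: a lane tip uniquely determines its history. -/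
theorem tip_determines_history
    {α β : Type*} (digest : α → β) (hinj : Function.Injective digest)
    (parent : α → β) (k : ℕ) (c d : Fin (k + 1) → α)
    (hc : ∀ i : Fin k, parent (c i.succ) = digest (c i.castSucc))
    (hd : ∀ i : Fin k, parent (d i.succ) = digest (d i.castSucc))
    (htip : c (Fin.last k) = d (Fin.last k)) :
    ∀ i : Fin (k + 1), c i = d i := by
  intro i
  induction i using Fin.reverseInduction with
  | last => exact htip
  | cast i ih =>
    apply hinj
    rw [← hc i, ← hd i, ih]
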